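/- Suppose the inf-sup condition holds with constant c > 0: for every nonzero v ∈ U, the supremum over w ∈ Z with T*w ≠ 0 of |⟨v, T*w⟩| / ‖T*w‖ is at least c‖v‖. Let û ∈ H and let u ∈ U be the (LL*)⁻¹ approximation, i.e., ⟨P u, v⟩ = ⟨P û, v⟩ for all v ∈ U. Then ‖u − û‖ ≤ (1 + 1/c) · inf over v ∈ U of ‖v − û‖. -/
import Mathlib


open scoped RealInnerProductSpace

/-- error estimate for the (LL*)⁻¹ method: under the inf-sup
condition with constant `c > 0`, if `u ∈ U` satisfies `⟪P u, v⟫ = ⟪P û, v⟫` for all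
`v ∈ U`, then `‖u − û‖ ≤ (1 + 1/c) inf_{v ∈ U} ‖v − û‖`. -/
theorem llstar_inv_error_estimate
    {H : Type*} [NormedAddCommGroup H] [InnerProductSpace ℝ H] [CompleteSpace H]
    (T : H →ₗ.[ℝ] H) (hdense : Dense (T.domain : Set H)) (hclosed : T.IsClosed)
    (Z : Submodule ℝ T.adjoint.domain) [FiniteDimensional ℝ Z]
    (W : Submodule ℝ H) (hW : W = Z.map T.adjoint.toFun)
    (P : H →ₗ[ℝ] H) (hPmem : ∀ q : H, P q ∈ W)
    (hPorth : ∀ q : H, ∀ w ∈ W, ⟪q - P q, w⟫ = 0)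
    (U : Submodule ℝ H) [FiniteDimensional ℝ U]
    (c : ℝ) (hc : 0 < c)
    (hinfsup : ∀ v ∈ U, v ≠ 0 →
      c * ‖v‖ ≤ sSup {r : ℝ | ∃ w : T.adjoint.domain, w ∈ Z ∧ T.adjoint w ≠ 0 ∧
        r = |⟪v, T.adjoint w⟫| / ‖T.adjoint w‖})
    (uhat u : H) (hu : u ∈ U)
    (hweak : ∀ v ∈ U, ⟪P u, v⟫ = ⟪P uhat, v⟫) :
    ‖u - uhat‖ ≤ (1 + 1 / c) * ⨅ v : U, ‖(v : H) - uhat‖ := by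
  -- key projection identities
  have hfix : ∀ q : H, ∀ w ∈ W, ⟪q, w⟫ = ⟪P q, w⟫ := by
    intro q w hw
    have h := hPorth q w hw
    rw [inner_sub_left] at h
    linarith
  have hsymm : ∀ q r : H, ⟪P q, r⟫ = ⟪P q, P r⟫ := by
    intro q r
    have h := hfix r (P q) (hPmem q)
    have c1 := real_inner_comm r (P q)
    have c2 := real_inner_comm (P r) (P q)
    linarith [h, c1, c2, real_inner_comm (P q) r, real_inner_comm (P q) (P r)]
  have hPle : ∀ q : H, ‖P q‖ ≤ ‖q‖ := by
    intro q
    have h1 : ‖P q‖ ^ 2 = ⟪P q, q⟫ := by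
      rw [hsymm q q, real_inner_self_eq_norm_sq]
    have h2 : ⟪P q, q⟫ ≤ ‖P q‖ * ‖q‖ := real_inner_le_norm _ _
    nlinarith [norm_nonneg (P q), norm_nonneg q]
  -- inf-sup implies c‖v‖ ≤ ‖P v‖ on U
  have hA : ∀ v ∈ U, c * ‖v‖ ≤ ‖P v‖ := by
    intro v hv
    by_cases hv0 : v = 0
    · simp [hv0]
    · refine (hinfsup v hv hv0).trans (Real.sSup_le ?_ (norm_nonneg _))
      rintro r ⟨w, hwZ, hw0, rfl⟩
      have hmem : T.adjoint w ∈ W := by rw [hW]; exact ⟨w, hwZ, rfl⟩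
      rw [hfix v _ hmem, div_le_iff₀ (norm_pos_iff.mpr hw0)]
      exact abs_real_inner_le_norm _ _
  -- pointwise quasi-optimality
  have hkey : ∀ v : U, ‖u - uhat‖ ≤ (1 + 1 / c) * ‖(v : H) - uhat‖ := by
    rintro ⟨v, hv⟩
    simp only
    have hdU : u - v ∈ U := U.sub_mem hu hv
    have horth : ⟪P (u - uhat), u - v⟫ = 0 := by
      have h := hweak (u - v) hdU
      rw [map_sub, inner_sub_left]
      linarith
    have hPd_le : ‖P (u - v)‖ ≤ ‖v - uhat‖ := by
      have h1 : ‖P (u - v)‖ ^ 2 = ⟪P (u - v), u - v⟫ := by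
        rw [hsymm, real_inner_self_eq_norm_sq]
      have hdecomp : (u : H) - v = (u - uhat) + (uhat - v) := by abel
      have h2 : ⟪P (u - v), u - v⟫ = ⟪P (u - uhat), u - v⟫ + ⟪P (uhat - v), u - v⟫ := by
        rw [hdecomp, map_add, inner_add_left]
      have h3 : ⟪P (uhat - v), u - v⟫ ≤ ‖uhat - v‖ * ‖P (u - v)‖ := by
        rw [hsymm]
        calc ⟪P (uhat - v), P (u - v)⟫ ≤ ‖P (uhat - v)‖ * ‖P (u - v)‖ :=
              real_inner_le_norm _ _
          _ ≤ ‖uhat - v‖ * ‖P (u - v)‖ :=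
              mul_le_mul_of_nonneg_right (hPle _) (norm_nonneg _)
      have hrev : ‖uhat - v‖ = ‖v - uhat‖ := norm_sub_rev _ _
      nlinarith [norm_nonneg (P (u - v)), norm_nonneg (v - uhat)]
    have hcv : c * ‖u - v‖ ≤ ‖v - uhat‖ := (hA _ hdU).trans hPd_le
    have htri : ‖u - uhat‖ ≤ ‖u - v‖ + ‖v - uhat‖ := by
      calc ‖u - uhat‖ = ‖(u - v) + (v - uhat)‖ := by abel_nf
        _ ≤ ‖u - v‖ + ‖v - uhat‖ := norm_add_le _ _
    have huv : ‖u - v‖ ≤ ‖v - uhat‖ / c := by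
      rw [le_div_iff₀ hc]; linarith
    have : (1 + 1 / c) * ‖v - uhat‖ = ‖v - uhat‖ / c + ‖v - uhat‖ := by
      field_simp; ring
    linarith
  have hpos : 0 < 1 + 1 / c := by positivity
  have hinf : ‖u - uhat‖ / (1 + 1 / c) ≤ ⨅ v : U, ‖(v : H) - uhat‖ := by
    refine le_ciInf fun v => ?_
    rw [div_le_iff₀ hpos]
    calc ‖u - uhat‖ ≤ (1 + 1 / c) * ‖(v : H) - uhat‖ := hkey v
      _ = ‖(v : H) - uhat‖ * (1 + 1 / c) := by ring
  rw [div_le_iff₀ hpos] at hinf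
  calc ‖u - uhat‖ ≤ (⨅ v : U, ‖(v : H) - uhat‖) * (1 + 1 / c) := hinf
    _ = (1 + 1 / c) * ⨅ v : U, ‖(v : H) - uhat‖ := by ring
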